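/- If the LZ77 parse of s has z phrases, then there is a context-free grammar in Chomsky normal form generating exactly {s} of size O(z² log z); consequently, since z ≤ g, the smallest grammar problem admits an O(g log g)-approximation via this construction. -/

import Mathlib

open List

/-- The (non-self-referencing) greedy LZ77 parse of `s`: the phrases are nonempty and
concatenate to `s`; each phrase is a single character or an infix of the already-parsed
prefix, and each phrase is a longest prefix of the unparsed suffix occurring in the
parsed prefix. -/
def IsLZ77Parse {α : Type} (s : List α) (P : List (List α)) : Prop :=
  P.flatten = s ∧ (∀ p ∈ P, p ≠ []) ∧
  ∀ i : Fin P.length,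
    ((P.get i).length = 1 ∨ P.get i <:+: (P.take i.1).flatten) ∧
    ∀ q : List α, q <+: (P.drop i.1).flatten → q <:+: (P.take i.1).flatten →
      q.length ≤ max (P.get i).length 1

/-- The size of a context-free grammar: total number of symbols on right-hand sides. -/
noncomputable def grammarSize {T : Type} (G : ContextFreeGrammar T) : ℕ :=
  ∑ r ∈ G.rules, r.output.length

/-- A grammar is in Chomsky normal form: every rule is `A → a` or `A → B C`. -/
def IsCNF {T : Type} (G : ContextFreeGrammar T) : Prop :=
  ∀ r ∈ G.rules, (∃ a : T, r.output = [Symbol.terminal a]) ∨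
    (∃ B C : G.NT, r.output = [Symbol.nonterminal B, Symbol.nonterminal C])

namespace LZCNF

variable {α : Type}

abbrev Entry (α : Type) := α ⊕ ℕ × ℕ

def eval (D : List (Entry α)) : ℕ → List α
  | k =>
    match D[k]? with
    | some (Sum.inl a) => [a]
    | some (Sum.inr (i, j)) =>
        if h : i < k ∧ j < k then eval D i ++ eval D j else []
    | none => []
  termination_by k => k
  decreasing_by exacts [h.1, h.2]

def depth (D : List (Entry α)) : ℕ → ℕ
  | k =>
    match D[k]? with
    | some (Sum.inr (i, j)) =>
        if h : i < k ∧ j < k then max (depth D i) (depth D j) + 1 else 0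
    | _ => 0
  termination_by k => k
  decreasing_by exacts [h.1, h.2]

def Valid (D : List (Entry α)) : Prop :=
  ∀ (k i j : ℕ), D[k]? = some (Sum.inr (i, j)) → i < k ∧ j < k

lemma eval_inl {D : List (Entry α)} {a : α} {k : ℕ} (h : D[k]? = some (Sum.inl a)) :
    eval D k = [a] := by
  rw [eval, h]

lemma eval_inr {D : List (Entry α)} {i j k : ℕ} (h : D[k]? = some (Sum.inr (i,j)))
    (hv : Valid D) : eval D k = eval D i ++ eval D j := by
  rw [eval, h]
  exact dif_pos (hv k i j h)

lemma depth_inl {D : List (Entry α)} {a : α} {k : ℕ} (h : D[k]? = some (Sum.inl a)) :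
    depth D k = 0 := by
  rw [depth, h]

lemma depth_inr {D : List (Entry α)} {i j k : ℕ} (h : D[k]? = some (Sum.inr (i,j)))
    (hv : Valid D) : depth D k = max (depth D i) (depth D j) + 1 := by
  rw [depth, h]
  exact dif_pos (hv k i j h)

lemma eval_prefix {D D' : List (Entry α)} (hp : D <+: D') :
    ∀ k, k < D.length → eval D' k = eval D k := by
  intro k
  induction k using Nat.strong_induction_on with
  | _ k ih =>
    intro hk
    obtain ⟨E, rfl⟩ := hp
    have hget : (D ++ E)[k]? = D[k]? := List.getElem?_append_left hk
    rcases h : D[k]? with _ | e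
    · rw [eval, eval, hget, h]
    rcases e with a | ⟨i, j⟩
    · rw [eval_inl (hget.trans h), eval_inl h]
    · by_cases hij : i < k ∧ j < k
      · rw [eval, eval, hget, h]
        dsimp only
        rw [dif_pos hij, dif_pos hij, ih i hij.1 (hij.1.trans hk), ih j hij.2 (hij.2.trans hk)]
      · rw [eval, eval, hget, h]
        dsimp only
        rw [dif_neg hij, dif_neg hij]

lemma depth_prefix {D D' : List (Entry α)} (hp : D <+: D') :
    ∀ k, k < D.length → depth D' k = depth D k := by
  intro k
  induction k using Nat.strong_induction_on with
  | _ k ih =>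
    intro hk
    obtain ⟨E, rfl⟩ := hp
    have hget : (D ++ E)[k]? = D[k]? := List.getElem?_append_left hk
    rcases h : D[k]? with _ | e
    · rw [depth, depth, hget, h]
    rcases e with a | ⟨i, j⟩
    · rw [depth_inl (hget.trans h), depth_inl h]
    · by_cases hij : i < k ∧ j < k
      · rw [depth, depth, hget, h]
        dsimp only
        rw [dif_pos hij, dif_pos hij, ih i hij.1 (hij.1.trans hk), ih j hij.2 (hij.2.trans hk)]
      · rw [depth, depth, hget, h]
        dsimp only
        rw [dif_neg hij, dif_neg hij]

lemma Valid.push {D : List (Entry α)} (hv : Valid D) {i j : ℕ}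
    (hi : i < D.length) (hj : j < D.length) :
    Valid (D ++ [Sum.inr (i, j)]) := by
  intro k i' j' h
  rcases lt_or_ge k D.length with hk | hk
  · exact hv k i' j' ((List.getElem?_append_left hk).symm.trans h)
  · rcases eq_or_lt_of_le hk with rfl | hk'
    · rw [List.getElem?_concat_length] at h
      simp only [Option.some.injEq, Sum.inr.injEq, Prod.mk.injEq] at h
      obtain ⟨rfl, rfl⟩ := h
      exact ⟨hi, hj⟩
    · rw [List.getElem?_eq_none (by simp; omega)] at h
      simp at h

lemma Valid.pushc {D : List (Entry α)} (hv : Valid D) (a : α) :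
    Valid (D ++ [Sum.inl a]) := by
  intro k i' j' h
  rcases lt_or_ge k D.length with hk | hk
  · exact hv k i' j' ((List.getElem?_append_left hk).symm.trans h)
  · rcases eq_or_lt_of_le hk with rfl | hk'
    · rw [List.getElem?_concat_length] at h
      simp at h
    · rw [List.getElem?_eq_none (by simp; omega)] at h
      simp at h

lemma eval_push_inr {D : List (Entry α)} (hv : Valid D) {i j : ℕ}
    (hi : i < D.length) (hj : j < D.length) :
    eval (D ++ [Sum.inr (i, j)]) D.length = eval D i ++ eval D j := by
  have h1 : eval (D ++ [Sum.inr (i, j)]) i = eval D i :=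
    eval_prefix ⟨_, rfl⟩ i hi
  have h2 : eval (D ++ [(Sum.inr (i, j) : Entry α)]) j = eval D j :=
    eval_prefix ⟨_, rfl⟩ j hj
  rw [eval_inr (k := D.length) (List.getElem?_concat_length (l := D) (a := Sum.inr (i, j)))
    (hv.push hi hj), h1, h2]

lemma eval_push_inl {D : List (Entry α)} (a : α) :
    eval (D ++ [Sum.inl a]) D.length = [a] :=
  eval_inl (List.getElem?_concat_length (l := D) (a := Sum.inl a))

lemma depth_push_inr {D : List (Entry α)} (hv : Valid D) {i j : ℕ}
    (hi : i < D.length) (hj : j < D.length) :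
    depth (D ++ [Sum.inr (i, j)]) D.length = max (depth D i) (depth D j) + 1 := by
  have h1 : depth (D ++ [Sum.inr (i, j)]) i = depth D i :=
    depth_prefix ⟨_, rfl⟩ i hi
  have h2 : depth (D ++ [(Sum.inr (i, j) : Entry α)]) j = depth D j :=
    depth_prefix ⟨_, rfl⟩ j hj
  rw [depth_inr (k := D.length) (List.getElem?_concat_length (l := D) (a := Sum.inr (i, j)))
    (hv.push hi hj), h1, h2]

lemma depth_push_inl {D : List (Entry α)} (a : α) :
    depth (D ++ [Sum.inl a]) D.length = 0 :=
  depth_inl (List.getElem?_concat_length (l := D) (a := Sum.inl a))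

lemma take_exists : ∀ (k : ℕ) (D : List (Entry α)), Valid D → k < D.length →
    ∀ c : ℕ, 1 ≤ c → c ≤ (eval D k).length →
    ∃ (D' : List (Entry α)) (x : ℕ), Valid D' ∧ D <+: D' ∧
      D'.length ≤ D.length + depth D k + 1 ∧ x < D'.length ∧
      eval D' x = (eval D k).take c ∧ depth D' x ≤ depth D k := by
  intro k
  induction k using Nat.strong_induction_on with
  | _ k ih =>
    intro D hv hk c hc1 hc2
    by_cases hfull : c = (eval D k).length
    · exact ⟨D, k, hv, List.prefix_refl D, by omega, hk,
        by rw [hfull, List.take_length], le_refl _⟩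
    have hclt : c < (eval D k).length := lt_of_le_of_ne hc2 hfull
    have h : D[k]? = some D[k] := List.getElem?_eq_getElem hk
    rcases he : D[k] with a | ⟨i, j⟩
    · rw [he] at h
      rw [eval_inl h] at hclt
      simp at hclt
      omega
    · rw [he] at h
      have hij := hv k i j h
      have hevk : eval D k = eval D i ++ eval D j := eval_inr h hv
      have hdk : depth D k = max (depth D i) (depth D j) + 1 := depth_inr h hv
      by_cases hci : c ≤ (eval D i).length
      · obtain ⟨D', x, hv', hp', hlen', hx', heval', hdepth'⟩ :=
          ih i hij.1 D hv (hij.1.trans hk) c hc1 hci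
        refine ⟨D', x, hv', hp', by omega, hx', ?_, by omega⟩
        rw [heval', hevk, List.take_append_of_le_length hci]
      · push_neg at hci
        have hcj : c - (eval D i).length ≤ (eval D j).length := by
          rw [hevk, List.length_append] at hclt; omega
        obtain ⟨D', x, hv', hp', hlen', hx', heval', hdepth'⟩ :=
          ih j hij.2 D hv (hij.2.trans hk) (c - (eval D i).length) (by omega) hcj
        have hiD' : i < D'.length := lt_of_lt_of_le (hij.1.trans hk) hp'.length_le
        refine ⟨D' ++ [Sum.inr (i, x)], D'.length, hv'.push hiD' hx',
          hp'.trans ⟨_, rfl⟩, by simp; omega, by simp, ?_, ?_⟩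
        · rw [eval_push_inr hv' hiD' hx', heval', eval_prefix hp' i (hij.1.trans hk), hevk]
          have : c = (eval D i).length + (c - (eval D i).length) := by omega
          rw [this, List.take_append]
          rw [Nat.add_sub_cancel_left, List.take_of_length_le (Nat.le_add_right _ _)]
        · rw [depth_push_inr hv' hiD' hx', depth_prefix hp' i (hij.1.trans hk), hdk]
          have := hdepth'.trans (le_max_right (depth D i) (depth D j))
          omega

lemma drop_exists : ∀ (k : ℕ) (D : List (Entry α)), Valid D → k < D.length →
    ∀ c : ℕ, c < (eval D k).length →
    ∃ (D' : List (Entry α)) (x : ℕ), Valid D' ∧ D <+: D' ∧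
      D'.length ≤ D.length + depth D k + 1 ∧ x < D'.length ∧
      eval D' x = (eval D k).drop c ∧ depth D' x ≤ depth D k := by
  intro k
  induction k using Nat.strong_induction_on with
  | _ k ih =>
    intro D hv hk c hclt
    by_cases hzero : c = 0
    · exact ⟨D, k, hv, List.prefix_refl D, by omega, hk, by rw [hzero, List.drop_zero], le_refl _⟩
    have h : D[k]? = some D[k] := List.getElem?_eq_getElem hk
    rcases he : D[k] with a | ⟨i, j⟩
    · rw [he] at h
      rw [eval_inl h] at hclt
      simp at hclt
      omega
    · rw [he] at h
      have hij := hv k i j h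
      have hevk : eval D k = eval D i ++ eval D j := eval_inr h hv
      have hdk : depth D k = max (depth D i) (depth D j) + 1 := depth_inr h hv
      by_cases hci : (eval D i).length ≤ c
      · have hcj : c - (eval D i).length < (eval D j).length := by
          rw [hevk, List.length_append] at hclt; omega
        obtain ⟨D', x, hv', hp', hlen', hx', heval', hdepth'⟩ :=
          ih j hij.2 D hv (hij.2.trans hk) (c - (eval D i).length) hcj
        refine ⟨D', x, hv', hp', by omega, hx', ?_, by omega⟩
        rw [heval', hevk]
        have : c = (eval D i).length + (c - (eval D i).length) := by omega
        rw [this, List.drop_append]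
        rw [Nat.add_sub_cancel_left, List.drop_of_length_le (Nat.le_add_right _ _), List.nil_append]
      · push_neg at hci
        obtain ⟨D', x, hv', hp', hlen', hx', heval', hdepth'⟩ :=
          ih i hij.1 D hv (hij.1.trans hk) c hci
        have hjD' : j < D'.length := lt_of_lt_of_le (hij.2.trans hk) hp'.length_le
        refine ⟨D' ++ [Sum.inr (x, j)], D'.length, hv'.push hx' hjD',
          hp'.trans ⟨_, rfl⟩, by simp; omega, by simp, ?_, ?_⟩
        · rw [eval_push_inr hv' hx' hjD', heval', eval_prefix hp' j (hij.2.trans hk), hevk,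
            List.drop_append_of_le_length (le_of_lt hci)]
        · rw [depth_push_inr hv' hx' hjD', depth_prefix hp' j (hij.2.trans hk), hdk]
          have := hdepth'.trans (le_max_left (depth D i) (depth D j))
          omega

def GoodParse (P : List (List α)) : Prop :=
  (∀ p ∈ P, p ≠ []) ∧
  ∀ i : Fin P.length, (P.get i).length = 1 ∨ P.get i <:+: (P.take i.1).flatten

lemma goodparse_snoc {P : List (List α)} {p : List α} (h : GoodParse (P ++ [p])) :
    GoodParse P ∧ p ≠ [] ∧ (p.length = 1 ∨ p <:+: P.flatten) := by
  obtain ⟨hne, hq⟩ := h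
  refine ⟨⟨fun q hq' => hne q (by simp [hq']), fun i => ?_⟩, hne p (by simp), ?_⟩
  · have hi : i.1 < (P ++ [p]).length := by simp
    have := hq ⟨i.1, hi⟩
    simp only [List.get_eq_getElem, Fin.val_mk] at this ⊢
    rwa [List.getElem_append_left i.isLt,
      List.take_append_of_le_length (le_of_lt i.isLt)] at this
  · have hi : P.length < (P ++ [p]).length := by simp
    have := hq ⟨P.length, hi⟩
    simp only [List.get_eq_getElem, Fin.val_mk] at this
    rwa [List.getElem_concat_length, List.take_left] at this
    rfl

lemma build : ∀ (P : List (List α)), GoodParse P → P ≠ [] →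
    ∃ D : List (Entry α), Valid D ∧ 0 < D.length ∧
      D.length ≤ (2 * P.length + 3) * P.length ∧
      eval D (D.length - 1) = P.flatten ∧
      depth D (D.length - 1) ≤ P.length := by
  intro P
  induction P using List.reverseRecOn with
  | nil => intro _ h; exact absurd rfl h
  | append_singleton P p ih =>
    intro hg _
    obtain ⟨hgP, hpne, hlast⟩ := goodparse_snoc hg
    rcases eq_or_ne P [] with rfl | hPne
    · -- first phrase: must be a single character
      have hp1 : p.length = 1 := by
        rcases hlast with h1 | h2
        · exact h1
        · simp at h2
          exact absurd h2 hpne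
      obtain ⟨a, rfl⟩ := List.length_eq_one_iff.mp hp1
      refine ⟨[Sum.inl a], ?_, by simp, by simp, ?_, by simp [depth_inl]⟩
      · intro k i j h
        rcases k with _ | k <;> simp at h
      · simp [eval_inl (show [Sum.inl a][0]? = some (Sum.inl a) by rfl)]
    · obtain ⟨D, hv, hpos, hlen, hev, hdep⟩ := ih hgP hPne
      set L := P.length with hL
      have hL1 : 1 ≤ L := by
        rcases P with _ | _
        · exact absurd rfl hPne
        · simp [hL]
      set t := D.length - 1 with ht
      have htlt : t < D.length := by omega
      rcases hlast with hp1 | hinf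
      · -- single character phrase
        obtain ⟨a, rfl⟩ := List.length_eq_one_iff.mp hp1
        have hv1 := hv.pushc a
        set D1 := D ++ [(Sum.inl a : Entry α)] with hD1
        have hv2 := hv1.push (i := t) (j := D.length)
          (by simp [hD1]; omega) (by simp [hD1])
        refine ⟨D1 ++ [Sum.inr (t, D.length)], hv2, by simp, ?_, ?_, ?_⟩
        · simp only [List.length_append, List.length_singleton, hD1]
          have : D.length ≤ (2 * L + 3) * L := hlen
          nlinarith [hL1]
        · have hlen2 : (D1 ++ [(Sum.inr (t, D.length) : Entry α)]).length - 1 = D1.length := by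
            simp
          rw [hlen2, eval_push_inr hv1 (by simp [hD1]; omega) (by simp [hD1])]
          have e1 : eval D1 t = eval D t := eval_prefix ⟨_, rfl⟩ t htlt
          have e2 : eval D1 D.length = [a] := eval_push_inl a
          rw [e1, e2, hev]
          simp
        · have hlen2 : (D1 ++ [(Sum.inr (t, D.length) : Entry α)]).length - 1 = D1.length := by
            simp
          rw [hlen2, depth_push_inr hv1 (by simp [hD1]; omega) (by simp [hD1])]
          have e1 : depth D1 t = depth D t := depth_prefix ⟨_, rfl⟩ t htlt
          have e2 : depth D1 D.length = 0 := depth_push_inl a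
          rw [e1, e2]
          simp
          omega
      · -- phrase is an infix of the already parsed prefix
        obtain ⟨u, v, huv⟩ := hinf
        have hplen : 1 ≤ p.length := List.length_pos_iff.mpr hpne
        have hflat : (eval D t).length = u.length + p.length + v.length := by
          rw [hev, ← huv]
          simp
          omega
        obtain ⟨D1, x, hv1, hp1', hlen1, hx1, hev1, hdep1⟩ :=
          take_exists t D hv htlt (u.length + p.length) (by omega) (by omega)
        have hevx : eval D1 x = u ++ p := by
          rw [hev1, hev, ← huv]
          have : u.length + p.length = (u ++ p).length := by simp
          rw [this, List.take_left]
        obtain ⟨D2, y, hv2, hp2', hlen2, hy2, hev2, hdep2⟩ :=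
          drop_exists x D1 hv1 hx1 u.length (by rw [hevx]; simp; omega)
        have hevy : eval D2 y = p := by
          rw [hev2, hevx, List.drop_left]
        have htD2 : t < D2.length := lt_of_lt_of_le htlt (hp1'.trans hp2').length_le
        have hv3 := hv2.push (i := t) (j := y) htD2 hy2
        refine ⟨D2 ++ [Sum.inr (t, y)], hv3, by simp, ?_, ?_, ?_⟩
        · simp only [List.length_append, List.length_singleton]
          have h1 : depth D t ≤ L := hdep
          have h2 : depth D1 x ≤ depth D t := hdep1
          have : D.length ≤ (2 * L + 3) * L := hlen
          nlinarith [hL1]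
        · have hlen3 : (D2 ++ [(Sum.inr (t, y) : Entry α)]).length - 1 = D2.length := by simp
          rw [hlen3, eval_push_inr hv2 htD2 hy2]
          have e1 : eval D2 t = eval D t := eval_prefix (hp1'.trans hp2') t htlt
          rw [e1, hevy, hev]
          simp
        · have hlen3 : (D2 ++ [(Sum.inr (t, y) : Entry α)]).length - 1 = D2.length := by simp
          rw [hlen3, depth_push_inr hv2 htD2 hy2]
          have e1 : depth D2 t = depth D t := depth_prefix (hp1'.trans hp2') t htlt
          have e2 : depth D2 y ≤ depth D t := hdep2.trans hdep1
          rw [e1]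
          simp
          constructor <;> omega


universe uN

noncomputable def out (D : List (Entry α)) (k : ℕ) : List (Symbol α (ULift.{0} ℕ)) :=
  match D[k]? with
  | some (Sum.inl a) => [Symbol.terminal a]
  | some (Sum.inr (i, j)) => [Symbol.nonterminal (ULift.up i), Symbol.nonterminal (ULift.up j)]
  | none => []

@[reducible]
noncomputable def toGrammar (D : List (Entry α)) : ContextFreeGrammar α :=
  letI : DecidableEq (ContextFreeRule α (ULift.{0} ℕ)) := Classical.decEq _
  ⟨ULift ℕ, ULift.up (D.length - 1),
    ((List.range D.length).map fun k => ⟨ULift.up k, out D k⟩).toFinset⟩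

lemma mem_toGrammar_rules {D : List (Entry α)} {r : ContextFreeRule α (ULift.{0} ℕ)} :
    r ∈ (toGrammar D).rules ↔ ∃ k < D.length, r = ⟨ULift.up k, out D k⟩ := by
  letI : DecidableEq (ContextFreeRule α (ULift.{0} ℕ)) := Classical.decEq _
  show r ∈ ((List.range D.length).map
    fun k => (⟨ULift.up k, out D k⟩ : ContextFreeRule α (ULift ℕ))).toFinset ↔ _
  rw [List.mem_toFinset, List.mem_map]
  constructor
  · rintro ⟨k, hk, rfl⟩
    exact ⟨k, List.mem_range.mp hk, rfl⟩
  · rintro ⟨k, hk, rfl⟩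
    exact ⟨k, List.mem_range.mpr hk, rfl⟩

lemma out_length_le {D : List (Entry α)} (k : ℕ) : (out D k).length ≤ 2 := by
  rw [out]
  rcases h : D[k]? with _ | e
  · simp
  · rcases e with a | ⟨i, j⟩ <;> simp

lemma toGrammar_size {D : List (Entry α)} :
    ∑ r ∈ (toGrammar D).rules, r.output.length ≤ 2 * D.length := by
  letI : DecidableEq (ContextFreeRule α (ULift.{0} ℕ)) := Classical.decEq _
  calc ∑ r ∈ (toGrammar D).rules, r.output.length
      ≤ (toGrammar D).rules.card • 2 := by
        apply Finset.sum_le_card_nsmul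
        intro r hr
        obtain ⟨k, _, rfl⟩ := mem_toGrammar_rules.mp hr
        exact out_length_le k
    _ ≤ D.length * 2 := by
        apply Nat.mul_le_mul_right
        calc (toGrammar D).rules.card
            ≤ ((List.range D.length).map
                fun k => (⟨ULift.up k, out D k⟩ : ContextFreeRule α (ULift.{0} ℕ))).length :=
              List.toFinset_card_le _
          _ = D.length := by simp
    _ = 2 * D.length := Nat.mul_comm _ _

def evalSym (D : List (Entry α)) : Symbol α (ULift.{0} ℕ) → List α
  | Symbol.terminal a => [a]
  | Symbol.nonterminal k => eval D k.down

lemma produces_flat {D : List (Entry α)} (hv : Valid D)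
    {u v : List (Symbol α (ULift.{0} ℕ))} (h : (toGrammar D).Produces u v) :
    (u.map (evalSym D)).flatten = (v.map (evalSym D)).flatten := by
  obtain ⟨r, hr, hrw⟩ := h
  obtain ⟨p, q, rfl, rfl⟩ := hrw.exists_parts
  simp only [List.map_append, List.flatten_append]
  congr 1
  congr 1
  obtain ⟨k, hk, rfl⟩ := mem_toGrammar_rules.mp hr
  have hkk : D[k]? = some D[k] := List.getElem?_eq_getElem hk
  rcases he : D[k] with a | ⟨i, j⟩ <;> rw [he] at hkk
  · show [eval D k].flatten = ((out D k).map (evalSym D)).flatten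
    rw [out, hkk, eval_inl hkk]
    simp [evalSym]
  · show [eval D k].flatten = ((out D k).map (evalSym D)).flatten
    rw [out, hkk, eval_inr hkk hv]
    simp [evalSym]

lemma derives_flat {D : List (Entry α)} (hv : Valid D)
    {u v : List (Symbol α (ULift.{0} ℕ))} (h : (toGrammar D).Derives u v) :
    (u.map (evalSym D)).flatten = (v.map (evalSym D)).flatten := by
  induction h with
  | refl => rfl
  | tail _ hstep ih => exact ih.trans (produces_flat hv hstep)

lemma flatten_map_singleton (w : List α) : (w.map (fun a => [a])).flatten = w := by
  induction w with
  | nil => rfl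
  | cons a w ih => simp [ih]

lemma derives_eval {D : List (Entry α)} (hv : Valid D) :
    ∀ k, k < D.length →
      (toGrammar D).Derives [Symbol.nonterminal (ULift.up k)]
        ((eval D k).map Symbol.terminal) := by
  intro k
  induction k using Nat.strong_induction_on with
  | _ k ih =>
    intro hk
    have hr : (⟨ULift.up k, out D k⟩ : ContextFreeRule α (ULift.{0} ℕ))
        ∈ (toGrammar D).rules :=
      mem_toGrammar_rules.mpr ⟨k, hk, rfl⟩
    have hprod : (toGrammar D).Produces [Symbol.nonterminal (ULift.up k)] (out D k) :=
      ⟨⟨ULift.up k, out D k⟩, hr, ContextFreeRule.Rewrites.input_output⟩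
    have hkk : D[k]? = some D[k] := List.getElem?_eq_getElem hk
    rcases he : D[k] with a | ⟨i, j⟩ <;> rw [he] at hkk
    · have : out D k = [Symbol.terminal a] := by rw [out, hkk]
      rw [eval_inl hkk]
      rw [this] at hprod
      exact hprod.single
    · have hout : out D k
          = [Symbol.nonterminal (ULift.up i), Symbol.nonterminal (ULift.up j)] := by
        rw [out, hkk]
      have hij := hv k i j hkk
      rw [eval_inr hkk hv, List.map_append]
      rw [hout] at hprod
      refine hprod.trans_derives ?_
      have h1 := (ih i hij.1 (hij.1.trans hk)).append_right
        [Symbol.nonterminal (ULift.up j)]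
      have h2 := (ih j hij.2 (hij.2.trans hk)).append_left
        ((eval D i).map Symbol.terminal)
      exact Relation.ReflTransGen.trans h1 h2

lemma toGrammar_language {D : List (Entry α)} (hv : Valid D) (hpos : 0 < D.length) :
    (toGrammar D).language = {eval D (D.length - 1)} := by
  ext w
  rw [ContextFreeGrammar.mem_language_iff]
  constructor
  · intro h
    have := derives_flat hv h
    simp only [List.map_map] at this
    have hl : ((List.map (evalSym D ∘ Symbol.terminal) w)).flatten = w := by
      show (w.map fun a => [a]).flatten = w
      exact flatten_map_singleton w
    simp only [List.map_cons, List.map_nil, List.flatten_cons, List.flatten_nil,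
      List.append_nil] at this
    rw [hl] at this
    show w ∈ ({eval D (D.length - 1)} : Set (List α))
    simp [← this]
    rfl
  · intro hw
    have hw' : w = eval D (D.length - 1) := hw
    rw [hw']
    exact derives_eval hv (D.length - 1) (by omega)

end LZCNF

namespace LZLB

universe u
variable {α : Type}

inductive DerivesIn (G : ContextFreeGrammar α) :
    List (Symbol α G.NT) → List (Symbol α G.NT) → ℕ → Prop
  | refl (u : List (Symbol α G.NT)) : DerivesIn G u u 0
  | head {u v w : List (Symbol α G.NT)} {n : ℕ} :
      G.Produces u v → DerivesIn G v w n → DerivesIn G u w (n + 1)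

variable {G : ContextFreeGrammar α}

lemma DerivesIn.to_derives {u v : List (Symbol α G.NT)} {n : ℕ}
    (h : DerivesIn G u v n) : G.Derives u v := by
  induction h with
  | refl u => exact ContextFreeGrammar.Derives.refl u
  | head hp _ ih => exact hp.trans_derives ih

lemma DerivesIn.tail {u v w : List (Symbol α G.NT)} {n : ℕ}
    (h : DerivesIn G u v n) (hp : G.Produces v w) : DerivesIn G u w (n + 1) := by
  induction h with
  | refl u => exact .head hp (.refl w)
  | head hp' _ ih => exact .head hp' (ih hp)

lemma derives_iff_derivesIn {u v : List (Symbol α G.NT)} :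
    G.Derives u v ↔ ∃ n, DerivesIn G u v n := by
  constructor
  · intro h
    induction h with
    | refl => exact ⟨0, .refl u⟩
    | tail _ hp ih => obtain ⟨n, hn⟩ := ih; exact ⟨n + 1, hn.tail hp⟩
  · rintro ⟨n, hn⟩
    exact hn.to_derives

lemma rewrites_nil {N : Type u} {r : ContextFreeRule α N} {v : List (Symbol α N)} :
    ¬ r.Rewrites [] v := by
  intro h
  obtain ⟨p, q, hpq, -⟩ := h.exists_parts
  simp at hpq

lemma rewrites_singleton {N : Type u} {r : ContextFreeRule α N} {A : N}
    {v : List (Symbol α N)} (h : r.Rewrites [Symbol.nonterminal A] v) :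
    r.input = A ∧ v = r.output := by
  cases h with
  | head s =>
    constructor
    · rfl
    · simp
  | cons x hrs => exact absurd hrs rewrites_nil

lemma rewrites_append {N : Type u} {r : ContextFreeRule α N} :
    ∀ {u v t : List (Symbol α N)}, r.Rewrites (u ++ v) t →
      (∃ u', r.Rewrites u u' ∧ t = u' ++ v) ∨ (∃ v', r.Rewrites v v' ∧ t = u ++ v') := by
  intro u
  induction u with
  | nil => intro v t h; exact Or.inr ⟨t, h, rfl⟩
  | cons x u' ih =>
    intro v t h
    cases h with
    | head s =>
      exact Or.inl ⟨r.output ++ u', ContextFreeRule.Rewrites.head u', by simp⟩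
    | cons _ hrs =>
      rcases ih hrs with ⟨u'', hu'', rfl⟩ | ⟨v', hv', rfl⟩
      · exact Or.inl ⟨x :: u'', ContextFreeRule.Rewrites.cons x hu'', by simp⟩
      · exact Or.inr ⟨v', hv', by simp⟩

lemma produces_append {u v t : List (Symbol α G.NT)} (h : G.Produces (u ++ v) t) :
    (∃ u', G.Produces u u' ∧ t = u' ++ v) ∨ (∃ v', G.Produces v v' ∧ t = u ++ v') := by
  obtain ⟨r, hr, hrw⟩ := h
  rcases rewrites_append hrw with ⟨u', hu', rfl⟩ | ⟨v', hv', rfl⟩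
  · exact Or.inl ⟨u', ⟨r, hr, hu'⟩, rfl⟩
  · exact Or.inr ⟨v', ⟨r, hr, hv'⟩, rfl⟩

lemma derivesIn_append_split : ∀ {n : ℕ} {t w : List (Symbol α G.NT)},
    DerivesIn G t w n → ∀ u v, t = u ++ v →
    ∃ w1 w2 n1 n2, w = w1 ++ w2 ∧ n1 + n2 = n ∧
      DerivesIn G u w1 n1 ∧ DerivesIn G v w2 n2 := by
  intro n t w h
  induction h with
  | refl t => rintro u v rfl; exact ⟨u, v, 0, 0, rfl, rfl, .refl u, .refl v⟩
  | head hp hd ih =>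
    rintro u v rfl
    rcases produces_append hp with ⟨u', hu', rfl⟩ | ⟨v', hv', rfl⟩
    · obtain ⟨w1, w2, n1, n2, rfl, rfl, h1, h2⟩ := ih u' v rfl
      exact ⟨w1, w2, n1 + 1, n2, rfl, by omega, .head hu' h1, h2⟩
    · obtain ⟨w1, w2, n1, n2, rfl, rfl, h1, h2⟩ := ih u v' rfl
      exact ⟨w1, w2, n1, n2 + 1, rfl, by omega, h1, .head hv' h2⟩

lemma no_terminal_produces {w : List α} {v : List (Symbol α G.NT)}
    (h : G.Produces (w.map Symbol.terminal) v) : False := by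
  obtain ⟨r, _, hrw⟩ := h
  obtain ⟨p, q, hpq, -⟩ := hrw.exists_parts
  have : Symbol.nonterminal r.input ∈ w.map (Symbol.terminal : α → Symbol α G.NT) := by
    rw [hpq]; simp
  simp only [List.mem_map] at this
  obtain ⟨a, -, ha⟩ := this
  cases ha

lemma derivesIn_terminal {w : List α} {v : List (Symbol α G.NT)} {n : ℕ}
    (h : DerivesIn G (w.map Symbol.terminal) v n) : v = w.map Symbol.terminal := by
  cases h with
  | refl => rfl
  | head hp _ => exact absurd hp no_terminal_produces

lemma derivesIn_nil {v : List (Symbol α G.NT)} {n : ℕ}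
    (h : DerivesIn G [] v n) : v = [] := by
  have := derivesIn_terminal (w := ([] : List α)) (by simpa using h)
  simpa using this

lemma map_terminal_append {w : List α} {u1 u2 : List (Symbol α G.NT)}
    (h : w.map Symbol.terminal = u1 ++ u2) :
    ∃ w1 w2, w = w1 ++ w2 ∧ u1 = w1.map Symbol.terminal ∧ u2 = w2.map Symbol.terminal := by
  rcases List.map_eq_append_iff.mp h with ⟨w1, w2, rfl, h1, h2⟩
  exact ⟨w1, w2, rfl, h1.symm, h2.symm⟩

lemma map_terminal_inj {w1 w2 : List α}
    (h : w1.map (Symbol.terminal : α → Symbol α G.NT) = w2.map Symbol.terminal) : w1 = w2 := by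
  apply List.map_injective_iff.mpr _ h
  intro a b hab
  exact Symbol.terminal.inj hab

lemma nt_ne_map_terminal {A : G.NT} {w : List α} :
    [Symbol.nonterminal A] ≠ w.map Symbol.terminal := by
  intro h
  cases w <;> simp at h

lemma infix_of_infix_append {y x w : List α} (h : y <:+: x) : y <:+: x ++ w :=
  h.trans (List.prefix_append x w).isInfix

lemma suffix_infix {x w : List α} : w <:+: x ++ w :=
  (List.suffix_append x w).isInfix


def ValidRel (x : List α) (Q : List (List α)) : Prop :=
  ∀ (i : ℕ) (hi : i < Q.length), Q[i].length = 1 ∨ Q[i] <:+: (x ++ (Q.take i).flatten)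

lemma validRel_nil {x : List α} : ValidRel x ([] : List (List α)) := by
  intro i hi
  simp at hi

lemma validRel_cons {x p : List α} {Q : List (List α)}
    (h0 : p.length = 1 ∨ p <:+: x) (h : ValidRel (x ++ p) Q) : ValidRel x (p :: Q) := by
  intro i hi
  cases i with
  | zero =>
    rcases h0 with h1 | h2
    · exact Or.inl h1
    · exact Or.inr (by simpa using h2)
  | succ i =>
    have := h i (by simpa using hi)
    rcases this with h1 | h2
    · exact Or.inl (by simpa using h1)
    · refine Or.inr ?_
      simp only [List.getElem_cons_succ, List.take_succ_cons, List.flatten_cons]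
      rwa [← List.append_assoc]

lemma validRel_append {x : List α} {Q1 Q2 : List (List α)}
    (h1 : ValidRel x Q1) (h2 : ValidRel (x ++ Q1.flatten) Q2) : ValidRel x (Q1 ++ Q2) := by
  induction Q1 generalizing x with
  | nil => simpa using h2
  | cons p Q1 ih =>
    have h0 := h1 0 (by simp)
    simp only [List.getElem_cons_zero, List.take_zero, List.flatten_nil,
      List.append_nil] at h0
    refine validRel_cons h0 (ih ?_ ?_)
    · intro i hi
      have := h1 (i + 1) (by simpa using hi)
      rcases this with ha | hb
      · exact Or.inl (by simpa using ha)
      · refine Or.inr ?_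
        simp only [List.getElem_cons_succ, List.take_succ_cons, List.flatten_cons] at hb
        rwa [← List.append_assoc] at hb
    · simpa [List.append_assoc] using h2


lemma DerivesIn.zero_eq {u v : List (Symbol α G.NT)} (h : DerivesIn G u v 0) : u = v := by
  cases h
  rfl

lemma DerivesIn.head_inv {u w : List (Symbol α G.NT)} {n : ℕ}
    (h : DerivesIn G u w (n + 1)) :
    ∃ v, G.Produces u v ∧ DerivesIn G v w n := by
  cases h with
  | head hp hd => exact ⟨_, hp, hd⟩

def Uniq (G : ContextFreeGrammar α) (B : G.NT) (y : List α) : Prop :=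
  ∀ y', G.Derives [Symbol.nonterminal B] (y'.map Symbol.terminal) → y' = y

lemma main_extract (G : ContextFreeGrammar α) (s : List α) (hG : G.language = {s}) :
    ∀ (m : ℕ) (sf : List (Symbol α G.NT)), ∀ m' ≤ m, ∀ (w x zz : List α),
      DerivesIn G sf (w.map Symbol.terminal) m' →
      (∀ u, G.Derives sf u →
        G.Derives [Symbol.nonterminal G.initial]
          (x.map Symbol.terminal ++ u ++ zz.map Symbol.terminal)) →
      x ++ w ++ zz = s →
      ∀ (S : Set G.NT), (∀ B ∈ S, ∃ y, Uniq G B y ∧ (y ≠ [] → y <:+: x)) →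
      ∀ (T : Set G.NT), (∀ A ∈ T, ∀ (y' : List α) (k : ℕ), k ≤ m' →
          ¬ DerivesIn G [Symbol.nonterminal A] (y'.map Symbol.terminal) k) →
      ∀ (R : Finset (ContextFreeRule α G.NT)),
        (∀ r ∈ G.rules, r ∉ R → r.input ∈ S ∪ T) →
      ∃ (Q : List (List α)) (S' : Set G.NT) (R' : Finset (ContextFreeRule α G.NT)),
        Q.flatten = w ∧ (∀ p ∈ Q, p ≠ []) ∧ ValidRel x Q ∧
        S ⊆ S' ∧ R' ⊆ R ∧
        Q.length + ∑ r ∈ R', r.output.length ≤ sf.length + ∑ r ∈ R, r.output.length ∧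
        (∀ B ∈ S', ∃ y, Uniq G B y ∧ (y ≠ [] → y <:+: x ++ w)) ∧
        (∀ r ∈ G.rules, r ∉ R' → r.input ∈ S' ∪ T) := by
  classical
  intro m
  induction m using Nat.strong_induction_on with
  | _ m ihm =>
  intro sf
  induction sf with
  | nil =>
    intro m' hm' w x zz hd hctx hs S hS T hT R hR
    have hw : w.map (Symbol.terminal : α → Symbol α G.NT) = [] := derivesIn_nil hd
    have hwnil : w = [] := by simpa using hw
    subst hwnil
    exact ⟨[], S, R, rfl, by simp, validRel_nil, subset_rfl, subset_rfl, by simp,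
      by simpa using hS, hR⟩
  | cons σ rest ih =>
    intro m' hm' w x zz hd hctx hs S hS T hT R hR
    obtain ⟨w1', w2', n1, n2, heq, hnn, hd1, hd2⟩ :=
      derivesIn_append_split hd [σ] rest rfl
    obtain ⟨w1, w2, rfl, rfl, rfl⟩ := map_terminal_append heq
    have hσd : G.Derives [σ] (w1.map Symbol.terminal) := hd1.to_derives
    have hctx2 : ∀ u, G.Derives rest u →
        G.Derives [Symbol.nonterminal G.initial]
          ((x ++ w1).map Symbol.terminal ++ u ++ zz.map Symbol.terminal) := by
      intro u hu
      have h2 : G.Derives (σ :: rest) (w1.map Symbol.terminal ++ u) := by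
        have := (hσd.append_right rest).trans (hu.append_left (w1.map Symbol.terminal))
        simpa using this
      have := hctx _ h2
      rw [List.map_append]
      simpa [List.append_assoc] using this
    have hs2 : (x ++ w1) ++ w2 ++ zz = s := by simpa [List.append_assoc] using hs
    have hT2 : ∀ A ∈ T, ∀ (y' : List α) (k : ℕ), k ≤ n2 →
        ¬ DerivesIn G [Symbol.nonterminal A] (y'.map Symbol.terminal) k :=
      fun A hA y' k hk => hT A hA y' k (by omega)
    have hSmono : ∀ B ∈ S, ∃ y, Uniq G B y ∧ (y ≠ [] → y <:+: x ++ w1) := by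
      intro B hB
      obtain ⟨y, hy1, hy2⟩ := hS B hB
      exact ⟨y, hy1, fun hne => infix_of_infix_append (hy2 hne)⟩
    have huniq_gen : ∀ (y' : List α),
        G.Derives [σ] (y'.map Symbol.terminal) → y' = w1 := by
      intro y' hy'
      have h2 : G.Derives (σ :: rest)
          (y'.map Symbol.terminal ++ w2.map Symbol.terminal) := by
        have := (hy'.append_right rest).trans
          ((hd2.to_derives).append_left (y'.map Symbol.terminal))
        simpa using this
      have h3 := hctx _ h2
      have hmem : (x ++ (y' ++ w2) ++ zz) ∈ G.language := by
        rw [ContextFreeGrammar.mem_language_iff]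
        simpa [List.map_append, List.append_assoc] using h3
      rw [hG] at hmem
      have h4 : x ++ (y' ++ w2) ++ zz = s := Set.mem_singleton_iff.mp hmem
      have h5 : x ++ (y' ++ (w2 ++ zz)) = x ++ (w1 ++ (w2 ++ zz)) := by
        have := h4.trans hs.symm
        simpa [List.append_assoc] using this
      exact List.append_cancel_right (List.append_cancel_left h5)
    cases σ with
    | terminal a =>
      have hw1 : w1 = [a] := by
        have h1 : w1.map (Symbol.terminal : α → Symbol α G.NT)
            = ([a]).map Symbol.terminal := by
          have := derivesIn_terminal (w := [a]) (G := G) (by simpa using hd1)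
          simpa using this
        exact map_terminal_inj h1
      obtain ⟨Q2, S2, R2, hf2, hne2, hv2, hsub2, hR2sub, hc2, hS2', hR2'⟩ :=
        ih n2 (by omega) w2 (x ++ w1) zz hd2 hctx2 hs2 S hSmono T hT2 R hR
      refine ⟨w1 :: Q2, S2, R2, by simp [hf2], ?_, ?_, hsub2, hR2sub, ?_, ?_, hR2'⟩
      · intro p hp
        rcases List.mem_cons.mp hp with rfl | hp2
        · rw [hw1]; simp
        · exact hne2 p hp2
      · exact validRel_cons (Or.inl (by rw [hw1]; rfl)) hv2
      · have := hc2
        simp only [List.length_cons]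
        omega
      · intro B hB
        obtain ⟨y, hy1, hy2⟩ := hS2' B hB
        refine ⟨y, hy1, fun hne => ?_⟩
        have := hy2 hne
        rwa [List.append_assoc] at this
    | nonterminal B =>
      have huniq : Uniq G B w1 := huniq_gen
      by_cases hBS : B ∈ S
      · obtain ⟨yB, hyBu, hyBi⟩ := hS B hBS
        have hw1y : w1 = yB := hyBu w1 hσd
        obtain ⟨Q2, S2, R2, hf2, hne2, hv2, hsub2, hR2sub, hc2, hS2', hR2'⟩ :=
          ih n2 (by omega) w2 (x ++ w1) zz hd2 hctx2 hs2 S hSmono T hT2 R hR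
        have hS2'' : ∀ B' ∈ S2, ∃ y, Uniq G B' y ∧ (y ≠ [] → y <:+: x ++ (w1 ++ w2)) := by
          intro B' hB'
          obtain ⟨y, hy1, hy2⟩ := hS2' B' hB'
          refine ⟨y, hy1, fun hne => ?_⟩
          have := hy2 hne
          rwa [List.append_assoc] at this
        by_cases hw1e : w1 = []
        · refine ⟨Q2, S2, R2, by rw [hf2, hw1e]; rfl, hne2, ?_, hsub2, hR2sub, ?_, hS2'', hR2'⟩
          · have : ValidRel (x ++ w1) Q2 := hv2
            rwa [hw1e, List.append_nil] at this
          · simp only [List.length_cons]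
            omega
        · have hw1x : w1 <:+: x := by
            rw [hw1y]
            exact hyBi (by rw [← hw1y]; exact hw1e)
          refine ⟨w1 :: Q2, S2, R2, by simp [hf2], ?_, ?_, hsub2, hR2sub, ?_, hS2'', hR2'⟩
          · intro p hp
            rcases List.mem_cons.mp hp with rfl | hp2
            · exact hw1e
            · exact hne2 p hp2
          · exact validRel_cons (Or.inr hw1x) hv2
          · simp only [List.length_cons]
            omega
      · -- expansion of a fresh nonterminal
        have hBT : B ∉ T := fun hBT => hT B hBT w1 n1 (by omega) hd1
        have hex : ∃ k, DerivesIn G [Symbol.nonterminal B] (w1.map Symbol.terminal) k :=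
          ⟨n1, hd1⟩
        have hμspec := Nat.find_spec hex
        have hμle : Nat.find hex ≤ n1 := Nat.find_min' hex hd1
        have hμpos : 0 < Nat.find hex := by
          rcases Nat.eq_zero_or_pos (Nat.find hex) with h0 | h
          · exfalso
            rw [h0] at hμspec
            have : [Symbol.nonterminal B] = w1.map Symbol.terminal := hμspec.zero_eq
            exact nt_ne_map_terminal this
          · exact h
        obtain ⟨μ₀, hμeq⟩ : ∃ μ₀, Nat.find hex = μ₀ + 1 :=
          ⟨Nat.find hex - 1, by omega⟩
        rw [hμeq] at hμspec
        obtain ⟨v, hp, hdrest⟩ := hμspec.head_inv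
        obtain ⟨r, hrmem, hrw⟩ := hp
        obtain ⟨hinp, rfl⟩ := rewrites_singleton hrw
        have hrR : r ∈ R := by
          by_contra hrnR
          rcases hR r hrmem hrnR with hS' | hT'
          · rw [hinp] at hS'; exact hBS hS'
          · rw [hinp] at hT'; exact hBT hT'
        have hprodB : G.Produces [Symbol.nonterminal B] r.output :=
          ⟨r, hrmem, by rw [← hinp]; exact ContextFreeRule.Rewrites.input_output⟩
        have hctxB : ∀ u, G.Derives r.output u →
            G.Derives [Symbol.nonterminal G.initial]
              (x.map Symbol.terminal ++ u ++ (w2 ++ zz).map Symbol.terminal) := by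
          intro u hu
          have h1 : G.Derives [Symbol.nonterminal B] u := hprodB.trans_derives hu
          have h2 : G.Derives (Symbol.nonterminal B :: rest)
              (u ++ w2.map Symbol.terminal) := by
            have := (h1.append_right rest).trans ((hd2.to_derives).append_left u)
            simpa using this
          have := hctx _ h2
          simpa [List.map_append, List.append_assoc] using this
        have hsB : x ++ w1 ++ (w2 ++ zz) = s := by simpa [List.append_assoc] using hs
        have hTB : ∀ A ∈ T ∪ {B}, ∀ (y' : List α) (k : ℕ), k ≤ μ₀ →
            ¬ DerivesIn G [Symbol.nonterminal A] (y'.map Symbol.terminal) k := by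
          intro A hA y' k hk hdk
          rcases hA with hA | hA
          · exact hT A hA y' k (by omega) hdk
          · have hAB : A = B := hA
            subst hAB
            have hy'w1 : y' = w1 := huniq y' hdk.to_derives
            subst hy'w1
            exact Nat.find_min hex (by omega) hdk
        have hRB : ∀ r' ∈ G.rules, r' ∉ R.erase r → r'.input ∈ S ∪ (T ∪ {B}) := by
          intro r' hr' hr'e
          by_cases hrr : r' = r
          · subst hrr
            right; right
            rw [hinp]
            rfl
          · have hnR : r' ∉ R := fun hmem => hr'e (Finset.mem_erase.mpr ⟨hrr, hmem⟩)
            rcases hR r' hr' hnR with h | h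
            · exact Or.inl h
            · exact Or.inr (Or.inl h)
        obtain ⟨Q1, S1, R1, hf1, hne1, hv1, hsub1, hR1sub, hc1, hS1', hR1'⟩ :=
          ihm μ₀ (by omega) r.output μ₀ le_rfl w1 x (w2 ++ zz) hdrest hctxB hsB
            S hS (T ∪ {B}) hTB (R.erase r) hRB
        have hS1B : ∀ B' ∈ S1 ∪ {B}, ∃ y, Uniq G B' y ∧ (y ≠ [] → y <:+: x ++ w1) := by
          intro B' hB'
          rcases hB' with h | h
          · exact hS1' B' h
          · have hBB : B' = B := h
            subst hBB
            exact ⟨w1, huniq, fun _ => suffix_infix⟩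
        have hR2pre : ∀ r' ∈ G.rules, r' ∉ R1 → r'.input ∈ (S1 ∪ {B}) ∪ T := by
          intro r' h1 h2
          have := hR1' r' h1 h2
          simp only [Set.mem_union, Set.mem_singleton_iff] at this ⊢
          tauto
        obtain ⟨Q2, S2, R2, hf2, hne2, hv2, hsub2, hR2sub, hc2, hS2', hR2'⟩ :=
          ih n2 (by omega) w2 (x ++ w1) zz hd2 hctx2 hs2 (S1 ∪ {B}) hS1B T hT2 R1 hR2pre
        refine ⟨Q1 ++ Q2, S2, R2, by simp [hf1, hf2], ?_, ?_, ?_, ?_, ?_, ?_, hR2'⟩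
        · intro p hp
          rcases List.mem_append.mp hp with h | h
          · exact hne1 p h
          · exact hne2 p h
        · refine validRel_append hv1 ?_
          rw [hf1]
          exact hv2
        · exact hsub1.trans ((Set.subset_union_left).trans hsub2)
        · exact hR2sub.trans (hR1sub.trans (Finset.erase_subset r R))
        · have herase : (∑ x ∈ R.erase r, x.output.length) + r.output.length
              = ∑ x ∈ R, x.output.length :=
            Finset.sum_erase_add R (fun x => x.output.length) hrR
          simp only [List.length_append, List.length_cons]
          omega
        · intro B' hB'
          obtain ⟨y, hy1, hy2⟩ := hS2' B' hB'
          refine ⟨y, hy1, fun hne => ?_⟩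
          have := hy2 hne
          rwa [List.append_assoc] at this


lemma exists_parse (G : ContextFreeGrammar α) (s : List α) (hG : G.language = {s}) :
    ∃ Q : List (List α), Q.flatten = s ∧ (∀ p ∈ Q, p ≠ []) ∧ ValidRel [] Q ∧
      Q.length ≤ 1 + ∑ r ∈ G.rules, r.output.length := by
  have hs : s ∈ G.language := by rw [hG]; rfl
  rw [ContextFreeGrammar.mem_language_iff] at hs
  obtain ⟨n, hn⟩ := derives_iff_derivesIn.mp hs
  obtain ⟨Q, S', R', hf, hne, hv, -, -, hc, -, -⟩ :=
    main_extract G s hG n [Symbol.nonterminal G.initial] n le_rfl s [] [] hn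
      (fun u hu => by simpa using hu) (by simp) ∅ (by simp) ∅ (by simp)
      G.rules (fun r hr hnr => absurd hr hnr)
  refine ⟨Q, hf, hne, hv, ?_⟩
  have h1 : Q.length ≤ Q.length + ∑ r ∈ R', r.output.length := Nat.le_add_right _ _
  refine h1.trans ?_
  simpa using hc

lemma size_pos (G : ContextFreeGrammar α) (s : List α) (hG : G.language = {s})
    (hs : s ≠ []) : 1 ≤ ∑ r ∈ G.rules, r.output.length := by
  by_contra h
  push_neg at h
  have h0 : ∑ r ∈ G.rules, r.output.length = 0 := by omega
  have hout : ∀ r ∈ G.rules, r.output = [] := by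
    intro r hr
    have := (Finset.sum_eq_zero_iff.mp h0) r hr
    exact List.length_eq_zero_iff.mp this
  have hsl : s ∈ G.language := by rw [hG]; rfl
  rw [ContextFreeGrammar.mem_language_iff] at hsl
  have key : ∀ v, G.Derives [Symbol.nonterminal G.initial] v →
      ∀ a : α, Symbol.terminal a ∉ v := by
    intro v hv
    induction hv with
    | refl => intro a ha; simp at ha
    | tail _ hp ih =>
      intro a ha
      obtain ⟨r, hr, hrw⟩ := hp
      obtain ⟨p, q, hu, hv'⟩ := hrw.exists_parts
      rw [hout r hr] at hv'
      subst hv'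
      apply ih a
      rw [hu]
      simp only [List.append_nil, List.mem_append] at ha ⊢
      tauto
  rcases s with _ | ⟨a, s'⟩
  · exact hs rfl
  · exact key _ hsl a (by simp)

end LZLB

namespace LZG

variable {α : Type}

lemma take_prefix_take {l : List α} {m n : ℕ} (h : m ≤ n) : l.take m <+: l.take n :=
  List.prefix_take_iff.mpr ⟨List.take_prefix _ _, by rw [List.length_take]; omega⟩

lemma flatten_take_prefix (P : List (List α)) (k : ℕ) :
    (P.take k).flatten <+: P.flatten := by
  conv_rhs => rw [← List.take_append_drop k P]
  rw [List.flatten_append]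
  exact List.prefix_append _ _

lemma flatten_take_mono (P : List (List α)) {j k : ℕ} (h : j ≤ k) :
    (P.take j).flatten <+: (P.take k).flatten := by
  obtain ⟨t, ht⟩ := take_prefix_take (l := P) h
  rw [← ht, List.flatten_append]
  exact List.prefix_append _ _

lemma btake_succ (P : List (List α)) {k : ℕ} (hk : k < P.length) :
    ((P.take (k + 1)).flatten).length = ((P.take k).flatten).length + P[k].length := by
  rw [List.take_succ, List.getElem?_eq_getElem hk, Option.toList_some, List.flatten_append,
    List.length_append]
  simp

lemma btake_full (P : List (List α)) {k : ℕ} (hk : P.length ≤ k) :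
    (P.take k).flatten = P.flatten := by
  rw [List.take_of_length_le hk]

lemma flatten_drop_eq (P : List (List α)) (k : ℕ) :
    (P.drop k).flatten = P.flatten.drop ((P.take k).flatten).length := by
  calc (P.drop k).flatten
      = ((P.take k).flatten ++ (P.drop k).flatten).drop ((P.take k).flatten).length :=
        List.drop_left.symm
    _ = P.flatten.drop ((P.take k).flatten).length := by
        rw [← List.flatten_append, List.take_append_drop]

lemma flatten_take_eq (P : List (List α)) (k : ℕ) :
    (P.take k).flatten = P.flatten.take ((P.take k).flatten).length := by
  calc (P.take k).flatten
      = ((P.take k).flatten ++ (P.drop k).flatten).take ((P.take k).flatten).length :=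
        List.take_left.symm
    _ = P.flatten.take ((P.take k).flatten).length := by
        rw [← List.flatten_append, List.take_append_drop]

lemma greedy_optimal {s : List α} {P Q : List (List α)}
    (hPf : P.flatten = s) (hPne : ∀ p ∈ P, p ≠ [])
    (hgreedy : ∀ i : Fin P.length, ∀ q : List α, q <+: (P.drop i.1).flatten →
      q <:+: (P.take i.1).flatten → q.length ≤ max (P.get i).length 1)
    (hQf : Q.flatten = s) (hQne : ∀ p ∈ Q, p ≠ [])
    (hQv : ∀ (i : ℕ) (hi : i < Q.length),
      Q[i].length = 1 ∨ Q[i] <:+: (Q.take i).flatten) :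
    P.length ≤ Q.length := by
  set n := s.length with hn
  set b : ℕ → ℕ := fun k => ((P.take k).flatten).length with hb
  set c : ℕ → ℕ := fun k => ((Q.take k).flatten).length with hc
  have hbmono : ∀ {j k : ℕ}, j ≤ k → b j ≤ b k :=
    fun h => (flatten_take_mono P h).length_le
  have hble : ∀ k, b k ≤ n := by
    intro k
    have := (flatten_take_prefix P k).length_le
    rwa [hPf] at this
  have hcle : ∀ k, c k ≤ n := by
    intro k
    have := (flatten_take_prefix Q k).length_le
    rwa [hQf] at this
  have hbfull : b P.length = n := by
    show ((P.take P.length).flatten).length = n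
    rw [List.take_length, hPf]
  have hcfull : c Q.length = n := by
    show ((Q.take Q.length).flatten).length = n
    rw [List.take_length, hQf]
  have hbstep : ∀ (k : ℕ) (hk : k < P.length), b (k + 1) = b k + P[k].length :=
    fun k hk => btake_succ P hk
  have hcstep : ∀ (k : ℕ) (hk : k < Q.length), c (k + 1) = c k + Q[k].length :=
    fun k hk => btake_succ Q hk
  have hbpos : ∀ (k : ℕ) (hk : k < P.length), 1 ≤ P[k].length := by
    intro k hk
    exact List.length_pos_iff.mpr (hPne P[k] (List.getElem_mem hk))
  have key : ∀ k, c k ≤ b k := by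
    intro k
    induction k with
    | zero =>
      show ((Q.take 0).flatten).length ≤ ((P.take 0).flatten).length
      simp
    | succ k ihk =>
      rcases le_or_gt P.length k with hPk | hPk
      · have hbn : b (k + 1) = n := by
          show ((P.take (k + 1)).flatten).length = n
          rw [btake_full P (by omega), hPf]
        rw [hbn]
        exact hcle _
      rcases le_or_gt Q.length k with hQk | hQk
      · have hcc : c (k + 1) = c k := by
          show ((Q.take (k + 1)).flatten).length = ((Q.take k).flatten).length
          rw [btake_full Q (by omega), btake_full Q (by omega)]
        rw [hcc]
        exact ihk.trans (hbmono (Nat.le_succ k))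
      · have hck1 : c (k + 1) = c k + Q[k].length := hcstep k hQk
        by_cases hle : c k + Q[k].length ≤ b k
        · rw [hck1]
          exact hle.trans (hbmono (Nat.le_succ k))
        push_neg at hle
        have hckn : c k + Q[k].length ≤ n := by rw [← hck1]; exact hcle _
        rcases hQv k hQk with h1 | h2
        · rw [hck1, hbstep k hPk]
          have := hbpos k hPk
          omega
        · have hQk' : Q[k] = (s.drop (c k)).take Q[k].length := by
            have hsplit : s = (Q.take k).flatten ++ (Q[k] ++ (Q.drop (k + 1)).flatten) := by
              conv_lhs => rw [← hQf]
              have hcons : (Q.drop k).flatten = Q[k] ++ (Q.drop (k + 1)).flatten := by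
                conv_lhs => rw [List.drop_eq_getElem_cons hQk, List.flatten_cons]
              rw [← hcons, ← List.flatten_append, List.take_append_drop]
            have hdrop : s.drop (c k) = Q[k] ++ (Q.drop (k + 1)).flatten := by
              conv_lhs => rw [hsplit]
              exact List.drop_left
            rw [hdrop, List.take_left]
          set q : List α := (s.drop (b k)).take (c k + Q[k].length - b k) with hq
          have hq2 : q = Q[k].drop (b k - c k) := by
            rw [hq]
            conv_rhs => rw [hQk']
            rw [List.drop_take, List.drop_drop]
            congr 1
            · omega
            · congr 1
              omega
          have hq1 : q <+: (P.drop k).flatten := by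
            rw [flatten_drop_eq P k, hPf]
            exact List.take_prefix _ _
          have hq3 : q <:+: (P.take k).flatten := by
            have hsuf : q <:+ Q[k] := by rw [hq2]; exact List.drop_suffix _ _
            have hQtb : (Q.take k).flatten <+: (P.take k).flatten := by
              rw [flatten_take_eq Q k, flatten_take_eq P k, hQf, hPf]
              exact take_prefix_take ihk
            exact (hsuf.isInfix.trans h2).trans hQtb.isInfix
          have hqlen : q.length = c k + Q[k].length - b k := by
            rw [hq, List.length_take, List.length_drop]
            have := hble k
            omega
          have hgr := hgreedy ⟨k, hPk⟩ q hq1 hq3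
          rw [List.get_eq_getElem] at hgr
          have hmax : max (P[k]'hPk).length 1 = P[k].length := by
            have := hbpos k hPk
            omega
          rw [hmax] at hgr
          rw [hck1, hbstep k hPk]
          omega
  by_contra hcon
  push_neg at hcon
  have h1 : c Q.length ≤ b Q.length := key Q.length
  have h2 : b Q.length < b P.length := by
    have hstep := hbstep Q.length hcon
    have := hbpos Q.length hcon
    have hmono := hbmono (show Q.length + 1 ≤ P.length by omega)
    omega
  rw [hcfull, hbfull] at *
  omega

end LZG

/-- From an LZ77 parse with `z` phrases one obtains a CNF grammar generating exactly
`{s}` of size `O(z² log z)`; since `z` is at most the size `g` of the smallest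
grammar, this is an `O(g log g)`-approximation to the smallest grammar. -/
theorem cnf_from_lz77_z_squared_log_z :
    ∃ C : ℕ, 0 < C ∧ ∀ {α : Type} (s : List α) (P : List (List α)),
      1 ≤ s.length → IsLZ77Parse s P →
      ∃ G : ContextFreeGrammar α, IsCNF G ∧ G.language = {s} ∧
        grammarSize G ≤ C * P.length ^ 2 * (Nat.log 2 P.length + 1) ∧
        ∀ Gmin : ContextFreeGrammar α, Gmin.language = {s} →
          grammarSize G ≤
            C * grammarSize Gmin ^ 2 * (Nat.log 2 (grammarSize Gmin) + 1) := by
  refine ⟨40, by norm_num, ?_⟩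
  intro α s P hs hP
  obtain ⟨hflat, hne, hprop⟩ := hP
  have hgood : LZCNF.GoodParse P := ⟨hne, fun i => (hprop i).1⟩
  have hPne : P ≠ [] := by
    rintro rfl
    rw [← hflat] at hs
    simp at hs
  obtain ⟨D, hv, hpos, hlen, hev, -⟩ := LZCNF.build P hgood hPne
  have hz1 : 1 ≤ P.length := List.length_pos_iff.mpr hPne
  have hsize : grammarSize (LZCNF.toGrammar D) ≤ 10 * P.length ^ 2 := by
    have h1 : grammarSize (LZCNF.toGrammar D) ≤ 2 * D.length := LZCNF.toGrammar_size
    have h2 : D.length ≤ (2 * P.length + 3) * P.length := hlen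
    have h3 : P.length ^ 2 = P.length * P.length := by ring
    nlinarith
  refine ⟨LZCNF.toGrammar D, ?_, ?_, ?_, ?_⟩
  · -- Chomsky normal form
    intro r hr
    obtain ⟨k, hk, rfl⟩ := LZCNF.mem_toGrammar_rules.mp hr
    have hkk : D[k]? = some D[k] := List.getElem?_eq_getElem hk
    rcases he : D[k] with a | ⟨i, j⟩ <;> rw [he] at hkk
    · exact Or.inl ⟨a, by show LZCNF.out D k = _; rw [LZCNF.out, hkk]⟩
    · exact Or.inr ⟨ULift.up i, ULift.up j, by show LZCNF.out D k = _; rw [LZCNF.out, hkk]⟩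
  · -- generated language
    rw [LZCNF.toGrammar_language hv hpos, hev, hflat]
  · -- size bound in terms of the parse
    have hlog : 1 ≤ Nat.log 2 P.length + 1 := by omega
    calc grammarSize (LZCNF.toGrammar D) ≤ 10 * P.length ^ 2 := hsize
      _ = 10 * P.length ^ 2 * 1 := by ring
      _ ≤ 40 * P.length ^ 2 * (Nat.log 2 P.length + 1) :=
          Nat.mul_le_mul (by nlinarith) hlog
  · -- approximation guarantee
    intro Gmin hGmin
    have hsne : s ≠ [] := by
      rintro rfl
      simp at hs
    have hgs : grammarSize Gmin = ∑ r ∈ Gmin.rules, r.output.length := rfl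
    have hg1 : 1 ≤ grammarSize Gmin := by
      rw [hgs]
      exact LZLB.size_pos Gmin s hGmin hsne
    obtain ⟨Q, hQf, hQne, hQv, hQlen⟩ := LZLB.exists_parse Gmin s hGmin
    have hPQ : P.length ≤ Q.length :=
      LZG.greedy_optimal hflat hne (fun i => (hprop i).2) hQf hQne
        (fun i hi => by have := hQv i hi; simpa using this)
    have hzg : P.length ≤ 2 * grammarSize Gmin := by
      rw [hgs]
      rw [hgs] at hg1
      omega
    have hsq : P.length ^ 2 ≤ 4 * grammarSize Gmin ^ 2 := by
      have := Nat.pow_le_pow_left hzg 2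
      have h4 : (2 * grammarSize Gmin) ^ 2 = 4 * grammarSize Gmin ^ 2 := by ring
      omega
    have hlog : 1 ≤ Nat.log 2 (grammarSize Gmin) + 1 := by omega
    calc grammarSize (LZCNF.toGrammar D) ≤ 10 * P.length ^ 2 := hsize
      _ ≤ 40 * grammarSize Gmin ^ 2 := by omega
      _ = 40 * grammarSize Gmin ^ 2 * 1 := by ring
      _ ≤ 40 * grammarSize Gmin ^ 2 * (Nat.log 2 (grammarSize Gmin) + 1) :=
          Nat.mul_le_mul le_rfl hlog
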